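/- For all positive real numbers a, b with a ≠ b, and with λ = (1 + √(12/π − 3))/2, the strict inequality C̄(λ·a + (1−λ)·b, λ·b + (1−λ)·a) < T(a,b) holds. -/

import Mathlib

open Real

/-- The Seiffert mean of two positive reals. -/
noncomputable def seiffertT (a b : ℝ) : ℝ := (a - b) / (2 * Real.arctan ((a - b) / (a + b)))

/-- The centroidal mean of two positive reals. -/
noncomputable def centroidalMean (a b : ℝ) : ℝ := 2 * (a ^ 2 + a * b + b ^ 2) / (3 * (a + b))

set_option maxHeartbeats 800000 in
lemma key_arctan (t : ℝ) (ht0 : 0 < t) (ht1 : t < 1) :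
    Real.arctan t < t / (1 + (4 / π - 1) * t ^ 2) := by
  have hpil : (3141592/1000000 : ℝ) < π := by have := Real.pi_gt_d6; norm_num at this ⊢; linarith
  have hpiu : π < 315/100 := by have := Real.pi_lt_d2; norm_num at this ⊢; linarith
  have hpipos : (0:ℝ) < π := by linarith
  obtain ⟨c, hcdef⟩ : ∃ c : ℝ, c = 4 / π - 1 := ⟨_, rfl⟩
  rw [← hcdef]
  have h4u : 4 / π < 1274/1000 := by rw [div_lt_iff₀ hpipos]; nlinarith
  have h4l : (1269/1000:ℝ) < 4 / π := by rw [lt_div_iff₀ hpipos]; nlinarith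
  have hcl : (269/1000:ℝ) < c := by rw [hcdef]; linarith
  have hcu : c < 274/1000 := by rw [hcdef]; linarith
  have hc0 : (0:ℝ) < c := by linarith
  have hc3 : 3 * c < 1 := by linarith
  have hcc : (0:ℝ) < c * (1 + c) := by nlinarith
  have hquad : 1 - 3 * c < c * (1 + c) := by nlinarith
  have h1c : 1 + c = 4 / π := by rw [hcdef]; ring
  have hden : ∀ x : ℝ, 0 < 1 + c * x ^ 2 := fun x => by positivity
  set g : ℝ → ℝ := fun x => x / (1 + c * x ^ 2) - Real.arctan x with hgdef
  have hderiv : ∀ x : ℝ, HasDerivAt g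
      (x ^ 2 * ((1 - 3*c) - c*(1+c)*x^2) / ((1 + c*x^2)^2 * (1 + x^2))) x := by
    intro x
    have h1 : HasDerivAt (fun x : ℝ => 1 + c * x ^ 2) (c * (2 * x)) x := by
      simpa using ((hasDerivAt_pow 2 x).const_mul c).const_add 1
    have h2 : HasDerivAt (fun x : ℝ => x / (1 + c * x ^ 2))
        ((1 * (1 + c * x ^ 2) - x * (c * (2 * x))) / (1 + c * x ^ 2) ^ 2) x :=
      (hasDerivAt_id x).div h1 (hden x).ne'
    have h3 := h2.sub (Real.hasDerivAt_arctan x)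
    refine h3.congr_deriv ?_
    have hx2 : (0:ℝ) < 1 + x^2 := by positivity
    field_simp
    ring
  have hgc : Continuous g := by
    apply Continuous.sub _ Real.continuous_arctan
    exact continuous_id.div (by continuity) (fun x => (hden x).ne')
  obtain ⟨T0, hT0def⟩ : ∃ T0 : ℝ, T0 = Real.sqrt ((1 - 3*c)/(c*(1+c))) := ⟨_, rfl⟩
  have harg : 0 < (1 - 3*c)/(c*(1+c)) := div_pos (by linarith) hcc
  have hT0pos : 0 < T0 := hT0def ▸ Real.sqrt_pos.mpr harg
  have hT0sq : T0 ^ 2 = (1 - 3*c)/(c*(1+c)) := hT0def ▸ Real.sq_sqrt harg.le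
  have hT01 : T0 < 1 := by
    rw [hT0def, Real.sqrt_lt' one_pos, one_pow, div_lt_one hcc]; linarith
  have hmono : StrictMonoOn g (Set.Icc 0 T0) := by
    apply strictMonoOn_of_deriv_pos (convex_Icc 0 T0) hgc.continuousOn
    intro x hx
    rw [interior_Icc] at hx
    rw [(hderiv x).deriv]
    apply div_pos
    · apply mul_pos (pow_pos hx.1 2)
      have hx2 : x^2 < T0^2 := pow_lt_pow_left₀ hx.2 hx.1.le (by norm_num)
      rw [hT0sq] at hx2
      have h := (lt_div_iff₀ hcc).mp hx2
      linarith
    · exact mul_pos (pow_pos (hden x) 2) (by positivity)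
  have hanti : StrictAntiOn g (Set.Icc T0 1) := by
    apply strictAntiOn_of_deriv_neg (convex_Icc T0 1) hgc.continuousOn
    intro x hx
    rw [interior_Icc] at hx
    rw [(hderiv x).deriv]
    apply div_neg_of_neg_of_pos
    · have hx0 : 0 < x := lt_trans hT0pos hx.1
      have hx2 : T0^2 < x^2 := pow_lt_pow_left₀ hx.1 hT0pos.le (by norm_num)
      rw [hT0sq] at hx2
      have h := (div_lt_iff₀ hcc).mp hx2
      exact mul_neg_of_pos_of_neg (pow_pos hx0 2) (by linarith)
    · exact mul_pos (pow_pos (hden x) 2) (by positivity)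
  have hg0 : g 0 = 0 := by simp [hgdef]
  have hg1 : g 1 = 0 := by
    simp only [hgdef]
    rw [Real.arctan_one, show (1:ℝ) + c * 1 ^ 2 = 4 / π by rw [← h1c]; ring,
      one_div_div]
    ring
  have hpos : 0 < g t := by
    rcases le_or_gt t T0 with h | h
    · have := hmono (Set.left_mem_Icc.mpr hT0pos.le) ⟨ht0.le, h⟩ ht0
      rwa [hg0] at this
    · have := hanti ⟨h.le, ht1.le⟩ (Set.right_mem_Icc.mpr hT01.le) ht1
      rwa [hg1] at this
  simp only [hgdef] at hpos
  linarith

lemma centroidal_comm (x y : ℝ) : centroidalMean x y = centroidalMean y x := by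
  unfold centroidalMean; ring

lemma seiffert_comm (a b : ℝ) : seiffertT a b = seiffertT b a := by
  unfold seiffertT
  rw [show (b - a) / (b + a) = -((a - b) / (a + b)) by ring, Real.arctan_neg,
    show b - a = -(a - b) by ring]
  ring

lemma main_half (a b : ℝ) (hb : 0 < b) (hba : b < a) :
    centroidalMean
        (((1 + Real.sqrt (12 / π - 3)) / 2) * a + (1 - (1 + Real.sqrt (12 / π - 3)) / 2) * b)
        (((1 + Real.sqrt (12 / π - 3)) / 2) * b + (1 - (1 + Real.sqrt (12 / π - 3)) / 2) * a)
      < seiffertT a b := by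
  have hpil : (3141592/1000000 : ℝ) < π := by have := Real.pi_gt_d6; norm_num at this ⊢; linarith
  have hpiu : π < 315/100 := by have := Real.pi_lt_d2; norm_num at this ⊢; linarith
  have hpipos : (0:ℝ) < π := by linarith
  have hS : 0 < a + b := by linarith
  have hD : 0 < a - b := by linarith
  obtain ⟨μ, hμdef⟩ : ∃ μ : ℝ, μ = Real.sqrt (12 / π - 3) := ⟨_, rfl⟩
  rw [← hμdef]
  have hargnn : (0:ℝ) ≤ 12 / π - 3 := by
    rw [sub_nonneg, le_div_iff₀ hpipos]; linarith
  have hμ2 : μ ^ 2 = 3 * (4 / π - 1) := by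
    rw [hμdef, Real.sq_sqrt hargnn]; ring
  obtain ⟨t, htdef⟩ : ∃ t : ℝ, t = (a - b) / (a + b) := ⟨_, rfl⟩
  have ht0 : 0 < t := htdef ▸ div_pos hD hS
  have ht1 : t < 1 := htdef ▸ (div_lt_one hS).mpr (by linarith)
  have hkey := key_arctan t ht0 ht1
  obtain ⟨c, hcdef⟩ : ∃ c : ℝ, c = 4 / π - 1 := ⟨_, rfl⟩
  rw [← hcdef] at hkey hμ2
  have hc0 : (0:ℝ) < c := by
    rw [hcdef, sub_pos, lt_div_iff₀ hpipos]; linarith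
  have hdenc : (0:ℝ) < 1 + c * t ^ 2 := by positivity
  have hx : ((1 + μ)/2)*a + (1 - (1+μ)/2)*b = (a+b)/2 + μ*(a-b)/2 := by ring
  have hy : ((1 + μ)/2)*b + (1 - (1+μ)/2)*a = (a+b)/2 - μ*(a-b)/2 := by ring
  rw [hx, hy]
  have hC : centroidalMean ((a+b)/2 + μ*(a-b)/2) ((a+b)/2 - μ*(a-b)/2)
      = (a+b)/2 + c * (a-b)^2 / (2*(a+b)) := by
    unfold centroidalMean
    have hne : (3:ℝ) * ((a+b)/2 + μ*(a-b)/2 + ((a+b)/2 - μ*(a-b)/2)) ≠ 0 := by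
      have : (3:ℝ) * ((a+b)/2 + μ*(a-b)/2 + ((a+b)/2 - μ*(a-b)/2)) = 3*(a+b) := by ring
      rw [this]; positivity
    rw [div_eq_iff hne]
    field_simp
    linear_combination (2*(a-b)^2*(a+b)) * hμ2
  rw [hC]
  have hT : seiffertT a b = (a - b) / (2 * Real.arctan t) := by
    unfold seiffertT; rw [htdef]
  rw [hT]
  have hat : 0 < Real.arctan t := by simpa using Real.arctan_strictMono ht0
  rw [lt_div_iff₀ (by positivity : (0:ℝ) < 2 * Real.arctan t)]
  have hk2 : Real.arctan t * (1 + c * t ^ 2) < t := (lt_div_iff₀ hdenc).mp hkey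
  have h3 : (a+b) * (Real.arctan t * (1 + c * t ^ 2)) < (a+b) * t :=
    mul_lt_mul_of_pos_left hk2 hS
  have h4 : (a+b) * t = a - b := by rw [htdef]; field_simp
  have h5 : ((a+b)/2 + c * (a-b)^2 / (2*(a+b))) * (2 * Real.arctan t)
      = (a+b) * (Real.arctan t * (1 + c * t ^ 2)) := by
    rw [htdef]; field_simp
  linarith

theorem stmt_0 (a b : ℝ) (ha : 0 < a) (hb : 0 < b) (hab : a ≠ b) :
    centroidalMean
        (((1 + Real.sqrt (12 / π - 3)) / 2) * a + (1 - (1 + Real.sqrt (12 / π - 3)) / 2) * b)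
        (((1 + Real.sqrt (12 / π - 3)) / 2) * b + (1 - (1 + Real.sqrt (12 / π - 3)) / 2) * a)
      < seiffertT a b := by
  rcases lt_or_gt_of_ne hab with h | h
  · rw [centroidal_comm, seiffert_comm]
    exact main_half b a ha h
  · exact main_half a b hb h
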